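/- For every d ≥ 2 there is ε = ε(d) ∈ (0,1), which may be taken as ε = 1/(8(d+3)²(6+31d)), such that for every d-regular graph E the graph G_E of the construction is ε-far from being Hamiltonian with respect to the degree bound d+3; that is, for every set F of unordered pairs of vertices of G_E with |F| ≤ ε·(d+3)·|V(G_E)|, the graph (V(G_E), E(G_E) △ F) is not Hamiltonian. -/

import Mathlib

open SimpleGraph

variable {V : Type*}

/-- The closed neighbourhood `N_G(S) = S ∪ {v : v adjacent to some w ∈ S}`. -/
def closedNbhd (G : SimpleGraph V) (S : Set V) : Set V :=
  S ∪ {v | ∃ w ∈ S, G.Adj v w}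

/-- `G` has maximum degree at most `d`. -/
def MaxDegLE (G : SimpleGraph V) (d : ℕ) : Prop :=
  ∀ v, (G.neighborSet v).ncard ≤ d

/-- `G` is `ε`-far from being Hamiltonian (w.r.t. the degree bound `d`):
modifying at most `ε·d·|V|` edges cannot make `G` Hamiltonian. -/
def FarFromHamiltonian [Fintype V] [DecidableEq V] (G : SimpleGraph V) (d : ℕ) (ε : ℝ) : Prop :=
  ∀ F : Finset (Sym2 V), (∀ e ∈ F, ¬ e.IsDiag) →
    (F.card : ℝ) ≤ ε * d * (Fintype.card V) →
    ¬ (SimpleGraph.fromEdgeSet (symmDiff G.edgeSet (↑F : Set (Sym2 V)))).IsHamiltonian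

/-- `G` is `δ`-locally Hamiltonian on the class `C`: for every `S` with `|S| ≤ δ·|V|`
there is a Hamiltonian `H ∈ C` (on the same vertex set, hence of the same order),
a set `T`, and an isomorphism `G[N_G(S)] ≅ H[N_H(T)]` mapping `S` onto `T`. -/
def LocallyHamiltonian [Fintype V] [DecidableEq V] (C : SimpleGraph V → Prop) (δ : ℝ)
    (G : SimpleGraph V) : Prop :=
  ∀ S : Set V, (S.ncard : ℝ) ≤ δ * (Fintype.card V) →
    ∃ H : SimpleGraph V, C H ∧ H.IsHamiltonian ∧ ∃ T : Set V,
      ∃ φ : (SimpleGraph.induce (closedNbhd G S) G) ≃g (SimpleGraph.induce (closedNbhd H T) H),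
        ∀ x : closedNbhd G S, (x : V) ∈ S ↔ ((φ x : V) ∈ T)

/-- `S` witnesses non-Hamiltonicity of `G` among graphs of maximum degree at most `d`:
no Hamiltonian graph `H` of the same order with degree bound `d` admits a set `T` and an
isomorphism `G[N_G(S)] ≅ H[N_H(T)]` mapping `S` onto `T`. -/
def WitnessesNonHamiltonicity [Fintype V] [DecidableEq V] (G : SimpleGraph V) (d : ℕ)
    (S : Set V) : Prop :=
  ∀ H : SimpleGraph V, H.IsHamiltonian → MaxDegLE H d → ∀ T : Set V,
    ¬ ∃ φ : (SimpleGraph.induce (closedNbhd G S) G) ≃g (SimpleGraph.induce (closedNbhd H T) H),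
        ∀ x : closedNbhd G S, (x : V) ∈ S ↔ ((φ x : V) ∈ T)

/-- `E` is `d`-regular. -/
def IsRegularDeg (E : SimpleGraph V) (d : ℕ) : Prop :=
  ∀ v, (E.neighborSet v).ncard = d

/-- The arcs of the directed graph `→E` obtained by replacing each edge by two arcs. -/
abbrev Arc (E : SimpleGraph V) : Type _ := {p : V × V // E.Adj p.1 p.2}

instance arcDecPred [Fintype V] (E : SimpleGraph V) [DecidableRel E.Adj] :
    DecidablePred (fun p : V × V => E.Adj p.1 p.2) := fun p => ‹DecidableRel E.Adj› p.1 p.2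

/-- The vertex set of `G_E`: 31 `a`-vertices per arc and 6 `b`-vertices per vertex. -/
abbrev GEVert (E : SimpleGraph V) : Type _ := (Arc E × Fin 31) ⊕ (V × Fin 6)

/-- For `1 ≤ j ≤ 31`, the vertex `a_j^e` of `G_E`. -/
def aV {E : SimpleGraph V} (e : Arc E) (j : ℕ) : GEVert E :=
  Sum.inl (e, ⟨(j - 1) % 31, by omega⟩)

/-- For `1 ≤ k ≤ 6`, the vertex `b_k^v` of `G_E`. -/
def bV (E : SimpleGraph V) (v : V) (k : ℕ) : GEVert E :=
  Sum.inr (v, ⟨(k - 1) % 6, by omega⟩)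

/-- Adjacency (with 1-based indices) inside the gadget `P(v_1,…,v_31)` (unsymmetrised):
`{v_i, v_{i+1}}` for `1 ≤ i ≤ 30`, `{v_j, v_{j+3}}` for `j ∈ {2,27}`, and
`{v_k, v_{k+5}}` for `k ∈ {6,12,15,21}`. -/
def gadgetRel (i j : ℕ) : Prop :=
  (1 ≤ i ∧ i ≤ 30 ∧ j = i + 1) ∨
  ((i = 2 ∧ j = 5) ∨ (i = 27 ∧ j = 30) ∨ (i = 6 ∧ j = 11) ∨ (i = 12 ∧ j = 17) ∨
    (i = 15 ∧ j = 20) ∨ (i = 21 ∧ j = 26))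

/-- The generating relation for the edges of `G_E`: the gadget edges, the cyclic edges given by
the linear order `f` on arcs, and the link edges (a link from the gadget of an arc `e = (u,v)`
to the gadget of an arc `e' = (v,w)` via `b_1^v,…,b_6^v`). -/
def GERel [Fintype V] (E : SimpleGraph V) [DecidableRel E.Adj]
    (f : Arc E ≃ Fin (Fintype.card (Arc E))) (x y : GEVert E) : Prop :=
  (∃ (e : Arc E) (i j : ℕ), gadgetRel i j ∧ x = aV e i ∧ y = aV e j) ∨
  (∃ e e' : Arc E, (f e').val = ((f e).val + 1) % (Fintype.card (Arc E)) ∧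
      x = aV e 31 ∧ y = aV e' 1) ∨
  (∃ e e' : Arc E, e.1.2 = e'.1.1 ∧
    ((x = aV e 23 ∧ y = aV e' 3) ∨ (x = aV e 18 ∧ y = aV e' 8) ∨
     (x = aV e 29 ∧ y = aV e' 9) ∨ (x = aV e 24 ∧ y = aV e' 14) ∨
     (x = aV e' 5 ∧ y = bV E e.1.2 1) ∨ (x = bV E e.1.2 1 ∧ y = bV E e.1.2 2) ∨
     (x = bV E e.1.2 2 ∧ y = bV E e.1.2 3) ∨ (x = bV E e.1.2 3 ∧ y = aV e 23) ∨
     (x = aV e 24 ∧ y = bV E e.1.2 4) ∨ (x = bV E e.1.2 4 ∧ y = bV E e.1.2 5) ∨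
     (x = bV E e.1.2 5 ∧ y = bV E e.1.2 6) ∨ (x = bV E e.1.2 6 ∧ y = aV e' 12)))

/-- The graph `G_E` of the construction. -/
def GE [Fintype V] (E : SimpleGraph V) [DecidableRel E.Adj]
    (f : Arc E ≃ Fin (Fintype.card (Arc E))) : SimpleGraph (GEVert E) :=
  SimpleGraph.fromRel (GERel E f)

/-- The list `L` of vertices is a subpath of the closed walk `C`, i.e. it appears (forwards or
reversed) as a sequence of consecutive vertices of `C` (cyclically). -/
def IsSubpath {W : Type*} (G : SimpleGraph W) {x : W} (C : G.Walk x x) (L : List W) : Prop :=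
  (∃ i : ℕ, ∀ (j : ℕ) (h : j < L.length), L.get ⟨j, h⟩ = C.getVert ((i + j) % C.length)) ∨
  (∃ i : ℕ, ∀ (j : ℕ) (h : j < L.reverse.length),
      L.reverse.get ⟨j, h⟩ = C.getVert ((i + j) % C.length))

/-- The expansion ratio of `E` is at least `1`: every nonempty `S` with `|S| ≤ |V|/2` has at
least `|S|` boundary edges. -/
def ExpansionGeOne [Fintype V] (E : SimpleGraph V) : Prop :=
  ∀ S : Set V, S.Nonempty → 2 * S.ncard ≤ Fintype.card V →
    S.ncard ≤ {p : Sym2 V | p ∈ E.edgeSet ∧ ∃ x ∈ S, ∃ y, y ∉ S ∧ p = s(x, y)}.ncard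


/-! ### Auxiliary development for Statement 11 -/

section GadgetAbstract

/-- symmetrised gadget adjacency (1-based) -/
def gAdj (i j : ℕ) : Prop := gadgetRel i j ∨ gadgetRel j i

/-- indices of gadget vertices that may have external neighbours -/
def ASet (i : ℕ) : Prop :=
  i = 1 ∨ i = 3 ∨ i = 5 ∨ i = 8 ∨ i = 9 ∨ i = 12 ∨ i = 14 ∨ i = 18 ∨ i = 23 ∨ i = 24 ∨
    i = 29 ∨ i = 31

variable {W : Type*} (ι : ℕ → W) (Cadj : W → W → Prop)

/-- `w` is one of the 31 gadget vertices -/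
def GInt (w : W) : Prop := ∃ j, 1 ≤ j ∧ j ≤ 31 ∧ w = ι j

variable
  (hinj : ∀ i j, 1 ≤ i → i ≤ 31 → 1 ≤ j → j ≤ 31 → ι i = ι j → i = j)
  (hsymm : ∀ x y, Cadj x y → Cadj y x)
  (h2 : ∀ x, ∃ y z, y ≠ z ∧ ∀ w, Cadj x w ↔ (w = y ∨ w = z))
  (hint : ∀ i j, 1 ≤ i → i ≤ 31 → 1 ≤ j → j ≤ 31 → Cadj (ι i) (ι j) → gAdj i j)
  (hnoext : ∀ i, 1 ≤ i → i ≤ 31 → ¬ ASet i → ∀ w, Cadj (ι i) w → GInt ι w)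
  (hcut : ∀ S : Set W, (∃ s, s ∈ S) → (∃ t, t ∉ S) → ∃ u v, u ∈ S ∧ v ∉ S ∧ Cadj u v)

section
include h2

lemma only2 {x u v w : W} (hu : Cadj x u) (hv : Cadj x v) (huv : u ≠ v) (hw : Cadj x w) :
    w = u ∨ w = v := by
  obtain ⟨y, z, hyz, hiff⟩ := h2 x
  rcases (hiff u).1 hu with rfl | rfl <;> rcases (hiff v).1 hv with rfl | rfl <;>
    rcases (hiff w).1 hw with rfl | rfl <;> tauto

lemma forced2 {x u v : W} (huv : u ≠ v) (hspec : ∀ w, Cadj x w → (w = u ∨ w = v)) :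
    Cadj x u ∧ Cadj x v := by
  obtain ⟨y, z, hyz, hiff⟩ := h2 x
  have hy : Cadj x y := (hiff y).2 (Or.inl rfl)
  have hz : Cadj x z := (hiff z).2 (Or.inr rfl)
  rcases hspec y hy with rfl | rfl <;> rcases hspec z hz with rfl | rfl <;>
    first | (exact absurd rfl hyz) | exact ⟨hy, hz⟩ | exact ⟨hz, hy⟩

end

section
include hinj h2 hint hnoext

/-- a non-`ASet` index whose gadget neighbours are exactly `{p,q}` has both edges. -/
lemma pairForced {i p q : ℕ} (hi1 : 1 ≤ i) (hi2 : i ≤ 31) (hiA : ¬ ASet i)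
    (hp1 : 1 ≤ p) (hp2 : p ≤ 31) (hq1 : 1 ≤ q) (hq2 : q ≤ 31) (hpq : p ≠ q)
    (hspec : ∀ j, 1 ≤ j → j ≤ 31 → gAdj i j → Cadj (ι i) (ι j) → j = p ∨ j = q) :
    Cadj (ι i) (ι p) ∧ Cadj (ι i) (ι q) := by
  refine forced2 Cadj h2 (fun h => hpq (hinj p q hp1 hp2 hq1 hq2 h)) ?_
  intro w hw
  obtain ⟨j, hj1, hj2, rfl⟩ := hnoext i hi1 hi2 hiA w hw
  rcases hspec j hj1 hj2 (hint i j hi1 hi2 hj1 hj2 hw) hw with rfl | rfl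
  · exact Or.inl rfl
  · exact Or.inr rfl

lemma F7 : Cadj (ι 7) (ι 6) ∧ Cadj (ι 7) (ι 8) := by
  refine pairForced ι Cadj hinj h2 hint hnoext (by norm_num) (by norm_num)
    (by unfold ASet; omega) (by norm_num) (by norm_num) (by norm_num) (by norm_num)
    (by norm_num) ?_
  intro j _ _ h _
  rcases h with h | h <;> simp only [gadgetRel] at h <;> omega

lemma F10 : Cadj (ι 10) (ι 9) ∧ Cadj (ι 10) (ι 11) := by
  refine pairForced ι Cadj hinj h2 hint hnoext (by norm_num) (by norm_num)
    (by unfold ASet; omega) (by norm_num) (by norm_num) (by norm_num) (by norm_num)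
    (by norm_num) ?_
  intro j _ _ h _
  rcases h with h | h <;> simp only [gadgetRel] at h <;> omega

lemma F13 : Cadj (ι 13) (ι 12) ∧ Cadj (ι 13) (ι 14) := by
  refine pairForced ι Cadj hinj h2 hint hnoext (by norm_num) (by norm_num)
    (by unfold ASet; omega) (by norm_num) (by norm_num) (by norm_num) (by norm_num)
    (by norm_num) ?_
  intro j _ _ h _
  rcases h with h | h <;> simp only [gadgetRel] at h <;> omega

lemma F16 : Cadj (ι 16) (ι 15) ∧ Cadj (ι 16) (ι 17) := by
  refine pairForced ι Cadj hinj h2 hint hnoext (by norm_num) (by norm_num)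
    (by unfold ASet; omega) (by norm_num) (by norm_num) (by norm_num) (by norm_num)
    (by norm_num) ?_
  intro j _ _ h _
  rcases h with h | h <;> simp only [gadgetRel] at h <;> omega

lemma F19 : Cadj (ι 19) (ι 18) ∧ Cadj (ι 19) (ι 20) := by
  refine pairForced ι Cadj hinj h2 hint hnoext (by norm_num) (by norm_num)
    (by unfold ASet; omega) (by norm_num) (by norm_num) (by norm_num) (by norm_num)
    (by norm_num) ?_
  intro j _ _ h _
  rcases h with h | h <;> simp only [gadgetRel] at h <;> omega

/-- if `11–6` is absent then `11–10` and `11–12` are present. -/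
lemma D2 (h116 : ¬ Cadj (ι 11) (ι 6)) : Cadj (ι 11) (ι 10) ∧ Cadj (ι 11) (ι 12) := by
  refine pairForced ι Cadj hinj h2 hint hnoext (by norm_num) (by norm_num)
    (by unfold ASet; omega) (by norm_num) (by norm_num) (by norm_num) (by norm_num)
    (by norm_num) ?_
  intro j hj1 hj2 h hadj
  have : j = 6 ∨ j = 10 ∨ j = 12 := by
    rcases h with h | h <;> simp only [gadgetRel] at h <;> omega
  rcases this with rfl | rfl | rfl
  · exact absurd hadj h116
  · exact Or.inl rfl
  · exact Or.inr rfl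

/-- if `17–12` is absent then `17–16` and `17–18` are present. -/
lemma D4 (h1712 : ¬ Cadj (ι 17) (ι 12)) : Cadj (ι 17) (ι 16) ∧ Cadj (ι 17) (ι 18) := by
  refine pairForced ι Cadj hinj h2 hint hnoext (by norm_num) (by norm_num)
    (by unfold ASet; omega) (by norm_num) (by norm_num) (by norm_num) (by norm_num)
    (by norm_num) ?_
  intro j hj1 hj2 h hadj
  have : j = 12 ∨ j = 16 ∨ j = 18 := by
    rcases h with h | h <;> simp only [gadgetRel] at h <;> omega
  rcases this with rfl | rfl | rfl
  · exact absurd hadj h1712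
  · exact Or.inl rfl
  · exact Or.inr rfl

include hsymm in
/-- if `17–18` is present then `18` has no external neighbour. -/
lemma D5 (h1718 : Cadj (ι 17) (ι 18)) : ∀ w, Cadj (ι 18) w → GInt ι w := by
  intro w hw
  have h1 : Cadj (ι 18) (ι 17) := hsymm _ _ h1718
  have h2' : Cadj (ι 18) (ι 19) := hsymm _ _ (F19 ι Cadj hinj h2 hint hnoext).1
  have hne : ι 17 ≠ ι 19 := fun h => by
    have := hinj 17 19 (by norm_num) (by norm_num) (by norm_num) (by norm_num) h; omega
  rcases only2 Cadj h2 h1 h2' hne hw with rfl | rfl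
  · exact ⟨17, by norm_num⟩
  · exact ⟨19, by norm_num⟩

/-- if `8` has no external neighbour then `8–7` and `8–9` are present. -/
lemma D1 (h8 : ∀ w, Cadj (ι 8) w → GInt ι w) : Cadj (ι 8) (ι 7) ∧ Cadj (ι 8) (ι 9) := by
  refine forced2 Cadj h2 (fun h => by
    have := hinj 7 9 (by norm_num) (by norm_num) (by norm_num) (by norm_num) h; omega) ?_
  intro w hw
  obtain ⟨j, hj1, hj2, rfl⟩ := h8 w hw
  have : j = 7 ∨ j = 9 := by
    rcases hint 8 j (by norm_num) (by norm_num) hj1 hj2 hw with h | h <;>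
      simp only [gadgetRel] at h <;> omega
  rcases this with rfl | rfl
  · exact Or.inl rfl
  · exact Or.inr rfl

include hsymm hcut

/-- the closed-set contradiction on `{6,…,11}`. -/
lemma CL (hout : ∃ t, ¬ GInt ι t) (h87 : Cadj (ι 8) (ι 7)) (h89 : Cadj (ι 8) (ι 9))
    (h611 : Cadj (ι 6) (ι 11)) : False := by
  have hF7 := F7 ι Cadj hinj h2 hint hnoext
  have hF10 := F10 ι Cadj hinj h2 hint hnoext
  have hne : ∀ p q : ℕ, 1 ≤ p → p ≤ 31 → 1 ≤ q → q ≤ 31 → p ≠ q → ι p ≠ ι q := by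
    intro p q a b c d h hh; exact h (hinj p q a b c d hh)
  set S : Set W := {w | ∃ j, 6 ≤ j ∧ j ≤ 11 ∧ w = ι j} with hS
  obtain ⟨t, ht⟩ := hout
  have htS : t ∉ S := by
    rintro ⟨j, h6, h11, rfl⟩; exact ht ⟨j, by omega, by omega, rfl⟩
  obtain ⟨u, v, huS, hvS, huv⟩ := hcut S ⟨ι 6, ⟨6, by norm_num⟩⟩ ⟨t, htS⟩
  obtain ⟨j, hj6, hj11, rfl⟩ := huS
  -- for each j in 6..11, the two known neighbours cover everything
  have key : ∀ (a b : ℕ), 6 ≤ a → a ≤ 11 → 6 ≤ b → b ≤ 11 → a ≠ b →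
      Cadj (ι j) (ι a) → Cadj (ι j) (ι b) → False := by
    intro a b ha1 ha2 hb1 hb2 hab hja hjb
    rcases only2 Cadj h2 hja hjb (hne a b (by omega) (by omega) (by omega) (by omega) hab) huv
      with rfl | rfl
    · exact hvS ⟨a, ha1, ha2, rfl⟩
    · exact hvS ⟨b, hb1, hb2, rfl⟩
  interval_cases j
  · exact key 7 11 (by norm_num) (by norm_num) (by norm_num) (by norm_num) (by norm_num)
      (hsymm _ _ hF7.1) h611
  · exact key 6 8 (by norm_num) (by norm_num) (by norm_num) (by norm_num) (by norm_num)
      hF7.1 hF7.2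
  · exact key 7 9 (by norm_num) (by norm_num) (by norm_num) (by norm_num) (by norm_num)
      h87 h89
  · exact key 8 10 (by norm_num) (by norm_num) (by norm_num) (by norm_num) (by norm_num)
      (hsymm _ _ h89) (hsymm _ _ hF10.1)
  · exact key 9 11 (by norm_num) (by norm_num) (by norm_num) (by norm_num) (by norm_num)
      hF10.1 hF10.2
  · exact key 10 6 (by norm_num) (by norm_num) (by norm_num) (by norm_num) (by norm_num)
      (hsymm _ _ hF10.2) (hsymm _ _ h611)

/-- no external edge at `8` implies no external edge at `18`. -/
lemma GLnoext8 (hout : ∃ t, ¬ GInt ι t) (h8 : ∀ w, Cadj (ι 8) w → GInt ι w) :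
    ∀ w, Cadj (ι 18) w → GInt ι w := by
  have hD1 := D1 ι Cadj hinj h2 hint hnoext h8
  by_cases h611 : Cadj (ι 6) (ι 11)
  · exact (CL ι Cadj hinj hsymm h2 hint hnoext hcut hout hD1.1 hD1.2 h611).elim
  · have h116 : ¬ Cadj (ι 11) (ι 6) := fun h => h611 (hsymm _ _ h)
    have hD2 := D2 ι Cadj hinj h2 hint hnoext h116
    have h1213 : Cadj (ι 12) (ι 13) := hsymm _ _ (F13 ι Cadj hinj h2 hint hnoext).1
    have h1211 : Cadj (ι 12) (ι 11) := hsymm _ _ hD2.2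
    have hne : ι 11 ≠ ι 13 := fun h => by
      have := hinj 11 13 (by norm_num) (by norm_num) (by norm_num) (by norm_num) h; omega
    have h1217 : ¬ Cadj (ι 12) (ι 17) := by
      intro h
      rcases only2 Cadj h2 h1211 h1213 hne h with h' | h' <;>
      · have := hinj _ _ (by norm_num) (by norm_num) (by norm_num) (by norm_num) h'; omega
    have h1712 : ¬ Cadj (ι 17) (ι 12) := fun h => h1217 (hsymm _ _ h)
    exact D5 ι Cadj hinj hsymm h2 hint hnoext
      (D4 ι Cadj hinj h2 hint hnoext h1712).2

/-- **Gadget lemma, part b**: an external edge at `18` forces one at `8`. -/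
lemma GLb (hx18 : ∃ w, Cadj (ι 18) w ∧ ¬ GInt ι w) :
    ∃ w, Cadj (ι 8) w ∧ ¬ GInt ι w := by
  by_contra h
  push_neg at h
  obtain ⟨w, hw, hwi⟩ := hx18
  exact hwi (GLnoext8 ι Cadj hinj hsymm h2 hint hnoext hcut ⟨w, hwi⟩
    (fun w' hw' => h w' hw') w hw)

/-- **Gadget lemma, part a**: at most one external edge at `18`. -/
lemma GLa : ∀ w w', Cadj (ι 18) w → Cadj (ι 18) w' → ¬ GInt ι w → ¬ GInt ι w' → w = w' := by
  intro w w' hw hw' hwi hwi'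
  by_contra hne
  have h1819 : Cadj (ι 18) (ι 19) := hsymm _ _ (F19 ι Cadj hinj h2 hint hnoext).1
  rcases only2 Cadj h2 hw hw' (fun h => hne h) h1819 with rfl | rfl
  · exact hwi ⟨19, by norm_num, by norm_num, rfl⟩ |>.elim
  · exact hwi' ⟨19, by norm_num, by norm_num, rfl⟩ |>.elim

/-- **Gadget lemma, part c**: an external edge at `12` forces one at `8` and none at `18`. -/
lemma GLc (hx12 : ∃ w, Cadj (ι 12) w ∧ ¬ GInt ι w) :
    (∃ w, Cadj (ι 8) w ∧ ¬ GInt ι w) ∧ (∀ w, Cadj (ι 18) w → GInt ι w) := by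
  obtain ⟨w12, hw12, hw12i⟩ := hx12
  have hout : ∃ t, ¬ GInt ι t := ⟨w12, hw12i⟩
  have h1213 : Cadj (ι 12) (ι 13) := hsymm _ _ (F13 ι Cadj hinj h2 hint hnoext).1
  have hne13 : ι 13 ≠ w12 := fun h => hw12i (h ▸ ⟨13, by norm_num, by norm_num, rfl⟩)
  have honly : ∀ u, Cadj (ι 12) u → u = ι 13 ∨ u = w12 :=
    fun u hu => only2 Cadj h2 h1213 hw12 hne13 hu
  have h1211 : ¬ Cadj (ι 12) (ι 11) := by
    intro h
    rcases honly _ h with h' | h'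
    · have := hinj 11 13 (by norm_num) (by norm_num) (by norm_num) (by norm_num) h'; omega
    · exact hw12i (h' ▸ ⟨11, by norm_num, by norm_num, rfl⟩)
  have h1217 : ¬ Cadj (ι 12) (ι 17) := by
    intro h
    rcases honly _ h with h' | h'
    · have := hinj 17 13 (by norm_num) (by norm_num) (by norm_num) (by norm_num) h'; omega
    · exact hw12i (h' ▸ ⟨17, by norm_num, by norm_num, rfl⟩)
  constructor
  · by_contra h
    push_neg at h
    have h8 : ∀ w, Cadj (ι 8) w → GInt ι w := fun w' hw' => h w' hw'
    have hD1 := D1 ι Cadj hinj h2 hint hnoext h8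
    have h116 : ¬ Cadj (ι 11) (ι 12) := fun hh => h1211 (hsymm _ _ hh)
    have hD2 : Cadj (ι 11) (ι 10) ∧ Cadj (ι 11) (ι 6) := by
      refine pairForced ι Cadj hinj h2 hint hnoext (by norm_num) (by norm_num)
        (by unfold ASet; omega) (by norm_num) (by norm_num) (by norm_num) (by norm_num)
        (by norm_num) ?_
      intro j hj1 hj2 hgj hadj
      have : j = 6 ∨ j = 10 ∨ j = 12 := by
        rcases hgj with hh | hh <;> simp only [gadgetRel] at hh <;> omega
      rcases this with rfl | rfl | rfl
      · exact Or.inr rfl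
      · exact Or.inl rfl
      · exact absurd hadj h116
    exact CL ι Cadj hinj hsymm h2 hint hnoext hcut hout hD1.1 hD1.2 (hsymm _ _ hD2.2)
  · have h1712 : ¬ Cadj (ι 17) (ι 12) := fun h => h1217 (hsymm _ _ h)
    exact D5 ι Cadj hinj hsymm h2 hint hnoext
      (D4 ι Cadj hinj h2 hint hnoext h1712).2

end
end GadgetAbstract

section HamCycleFacts

open SimpleGraph Walk

variable {U : Type*}

/-- In a path starting at `x`, the edges at `x` are exactly the first edge. -/
lemma path_start_edges {G : SimpleGraph U} {x c : U} (t : G.Walk x c) (ht : t.IsPath) (w : U) :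
    s(x, w) ∈ t.edges ↔ (¬ t.Nil ∧ w = t.getVert 1) := by
  cases t with
  | nil => simp
  | @cons _ v _ h t' =>
    rw [Walk.edges_cons]
    have hgv : (Walk.cons h t').getVert 1 = v := by
      rw [Walk.getVert_cons_succ, Walk.getVert_zero]
    constructor
    · intro hmem
      rcases List.mem_cons.mp hmem with heq | hmem'
      · rcases Sym2.eq_iff.mp heq with ⟨-, rfl⟩ | ⟨rfl, rfl⟩
        · exact ⟨by simp, hgv.symm⟩
        · exact absurd h (G.irrefl)
      · exact absurd (Walk.fst_mem_support_of_mem_edges t' hmem')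
          ((Walk.cons_isPath_iff h t').mp ht).2
    · rintro ⟨-, rfl⟩
      rw [hgv]
      exact List.mem_cons_self
  
/-- The start of a cycle has exactly two neighbours along the cycle. -/
lemma cycle_start_nbrs {G : SimpleGraph U} {x : U} (q : G.Walk x x) (hq : q.IsCycle) :
    ∃ y z, y ≠ z ∧ ∀ w, (s(x, w) ∈ q.edges ↔ (w = y ∨ w = z)) := by
  cases q with
  | nil => exact absurd rfl hq.ne_nil
  | @cons _ b _ h r =>
    have hrpath : r.IsPath := by
      refine Walk.IsPath.mk' ?_
      have := hq.support_nodup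
      simpa using this
    have hrev : r.reverse.IsPath := hrpath.reverse
    have hlen : 3 ≤ (Walk.cons h r).length := hq.three_le_length
    have hrevnil : ¬ r.reverse.Nil := by
      rw [Walk.nil_iff_length_eq]
      rw [Walk.length_reverse]
      simp only [Walk.length_cons] at hlen
      omega
    refine ⟨b, r.reverse.getVert 1, ?_, ?_⟩
    · intro hbz
      have hmem : s(x, b) ∈ r.edges := by
        have : s(x, b) ∈ r.reverse.edges :=
          (path_start_edges r.reverse hrev b).mpr ⟨hrevnil, hbz⟩
        rw [Walk.edges_reverse] at this
        exact List.mem_reverse.mp this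
      have htrail := hq.isTrail.edges_nodup
      rw [Walk.edges_cons] at htrail
      exact (List.nodup_cons.mp htrail).1 hmem
    · intro w
      rw [Walk.edges_cons, List.mem_cons]
      constructor
      · rintro (heq | hmem')
        · rcases Sym2.eq_iff.mp heq with ⟨-, rfl⟩ | ⟨rfl, rfl⟩
          · exact Or.inl rfl
          · exact absurd h (G.irrefl)
        · right
          have : s(x, w) ∈ r.reverse.edges := by
            rw [Walk.edges_reverse]; exact List.mem_reverse.mpr hmem'
          exact ((path_start_edges r.reverse hrev w).mp this).2
      · rintro (rfl | rfl)
        · exact Or.inl rfl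
        · right
          have : s(x, r.reverse.getVert 1) ∈ r.reverse.edges :=
            (path_start_edges r.reverse hrev _).mpr ⟨hrevnil, rfl⟩
          rw [Walk.edges_reverse] at this
          exact List.mem_reverse.mp this

/-- Every vertex has exactly two neighbours along a Hamiltonian cycle. -/
lemma ham_two_nbrs [DecidableEq U] {G : SimpleGraph U} {a : U} {p : G.Walk a a}
    (hp : p.IsHamiltonianCycle) (x : U) :
    ∃ y z, y ≠ z ∧ ∀ w, (p.toSubgraph.Adj x w ↔ (w = y ∨ w = z)) := by
  have hx : x ∈ p.support := hp.mem_support x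
  have hq : (p.rotate x hx).IsCycle := hp.isCycle.rotate hx
  obtain ⟨y, z, hyz, hiff⟩ := cycle_start_nbrs (p.rotate x hx) hq
  refine ⟨y, z, hyz, fun w => ?_⟩
  rw [← Walk.toSubgraph_rotate p hx, ← Subgraph.mem_edgeSet, Walk.edgeSet_toSubgraph]
  exact hiff w

/-- A walk from inside `T` to outside `T` crosses the boundary. -/
lemma walk_cross {G : SimpleGraph U} {T : Set U} {a b : U} (t : G.Walk a b)
    (ha : a ∈ T) (hb : b ∉ T) : ∃ u v, u ∈ T ∧ v ∉ T ∧ G.Adj u v := by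
  induction t with
  | nil => exact absurd ha hb
  | @cons a c b h t' ih =>
    by_cases hc : c ∈ T
    · exact ih hc hb
    · exact ⟨a, c, ha, hc, h⟩

/-- A Hamiltonian cycle crosses every nontrivial cut. -/
lemma ham_cut [DecidableEq U] {G : SimpleGraph U} {a : U} {p : G.Walk a a}
    (hp : p.IsHamiltonianCycle) (S : Set U) (h1 : ∃ s, s ∈ S) (h2 : ∃ t, t ∉ S) :
    ∃ u v, u ∈ S ∧ v ∉ S ∧ p.toSubgraph.Adj u v := by
  obtain ⟨s, hs⟩ := h1
  obtain ⟨t, ht⟩ := h2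
  have hsv : s ∈ p.toSubgraph.verts := (Walk.mem_verts_toSubgraph p).mpr (hp.mem_support s)
  have htv : t ∈ p.toSubgraph.verts := (Walk.mem_verts_toSubgraph p).mpr (hp.mem_support t)
  have hconn := p.toSubgraph_connected
  obtain ⟨w⟩ := hconn ⟨s, hsv⟩ ⟨t, htv⟩
  obtain ⟨u, v, hu, hv, huv⟩ := walk_cross (T := (Subtype.val ⁻¹' S)) w hs ht
  exact ⟨u.val, v.val, hu, hv, (Subgraph.coe_adj _ _ _).mp huv⟩

end HamCycleFacts

section Encoding

variable {V : Type*} [Fintype V] [DecidableEq V] (E : SimpleGraph V) [DecidableRel E.Adj]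

lemma aV_inj {e e' : Arc E} {i j : ℕ} (hi1 : 1 ≤ i) (hi2 : i ≤ 31) (hj1 : 1 ≤ j)
    (hj2 : j ≤ 31) (h : aV e i = aV e' j) : e = e' ∧ i = j := by
  simp only [aV, Sum.inl.injEq, Prod.mk.injEq, Fin.mk.injEq] at h
  refine ⟨h.1, ?_⟩
  have := h.2
  omega

lemma aV_ne_bV {e : Arc E} {i : ℕ} {v : V} {k : ℕ} : aV e i ≠ bV E v k := by
  simp [aV, bV]

lemma bV_inj {v v' : V} {k k' : ℕ} (h1 : 1 ≤ k) (h2 : k ≤ 6) (h1' : 1 ≤ k') (h2' : k' ≤ 6)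
    (h : bV E v k = bV E v' k') : v = v' ∧ k = k' := by
  simp only [bV, Sum.inr.injEq, Prod.mk.injEq, Fin.mk.injEq] at h
  refine ⟨h.1, ?_⟩
  have := h.2
  omega

lemma arc_ne (e : Arc E) : e.1.1 ≠ e.1.2 := fun h => E.irrefl (h ▸ e.2)

lemma gadgetRel_bounds {i j : ℕ} (h : gadgetRel i j) :
    1 ≤ i ∧ i ≤ 30 ∧ 2 ≤ j ∧ j ≤ 31 := by
  simp only [gadgetRel] at h
  omega

lemma succ_mod_ne {m k : ℕ} (hk : k < m) (hm : 2 ≤ m) : (k + 1) % m ≠ k := by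
  rcases Nat.lt_or_ge (k + 1) m with h | h
  · rw [Nat.mod_eq_of_lt h]; omega
  · have : k + 1 = m := by omega
    rw [this, Nat.mod_self]; omega

variable (f : Arc E ≃ Fin (Fintype.card (Arc E)))

/-- Master characterisation of `G_E`-neighbours of a gadget vertex. -/
lemma GE_adj_aV (hm : 2 ≤ Fintype.card (Arc E)) {g : Arc E} {i : ℕ}
    (hi1 : 1 ≤ i) (hi2 : i ≤ 31) {y : GEVert E} (hadj : (GE E f).Adj (aV g i) y) :
    (∃ j, 1 ≤ j ∧ j ≤ 31 ∧ y = aV g j ∧ gAdj i j) ∨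
    (i = 31 ∧ ∃ e', e' ≠ g ∧ y = aV e' 1) ∨
    (i = 1 ∧ ∃ e', e' ≠ g ∧ y = aV e' 31) ∨
    (i = 23 ∧ ∃ e', e' ≠ g ∧ y = aV e' 3) ∨
    (i = 3 ∧ ∃ e', e' ≠ g ∧ y = aV e' 23) ∨
    (i = 18 ∧ ∃ e', e' ≠ g ∧ y = aV e' 8) ∨
    (i = 8 ∧ ∃ e', e' ≠ g ∧ y = aV e' 18) ∨
    (i = 29 ∧ ∃ e', e' ≠ g ∧ y = aV e' 9) ∨
    (i = 9 ∧ ∃ e', e' ≠ g ∧ y = aV e' 29) ∨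
    (i = 24 ∧ ∃ e', e' ≠ g ∧ y = aV e' 14) ∨
    (i = 14 ∧ ∃ e', e' ≠ g ∧ y = aV e' 24) ∨
    (i = 5 ∧ ∃ v, y = bV E v 1) ∨ (i = 23 ∧ ∃ v, y = bV E v 3) ∨
    (i = 24 ∧ ∃ v, y = bV E v 4) ∨ (i = 12 ∧ ∃ v, y = bV E v 6) := by
  have hcyc : ∀ e e' : Arc E, (f e').val = ((f e).val + 1) % (Fintype.card (Arc E)) →
      e ≠ e' := by
    intro e e' h heq
    rw [heq] at h
    exact succ_mod_ne (f e').isLt hm h.symm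
  have hlink : ∀ e e' : Arc E, e.1.2 = e'.1.1 → e ≠ e' := by
    intro e e' h heq
    rw [heq] at h
    exact arc_ne E e' h.symm
  rw [GE, SimpleGraph.fromRel_adj] at hadj
  obtain ⟨-, hrel | hrel⟩ := hadj
  case inl =>
    rcases hrel with ⟨e, a, b, hg, hx, hy⟩ | ⟨e, e', hfe, hx, hy⟩ | ⟨e, e', hee, hl⟩
    · obtain ⟨ha1, ha2, hb1, hb2⟩ := gadgetRel_bounds hg
      obtain ⟨rfl, rfl⟩ := aV_inj E hi1 hi2 (by omega) (by omega) hx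
      exact Or.inl ⟨b, by omega, by omega, hy, Or.inl hg⟩
    · obtain ⟨rfl, rfl⟩ := aV_inj E hi1 hi2 (by norm_num) (by norm_num) hx
      refine Or.inr (Or.inl ⟨rfl, e', ?_, hy⟩)
      intro h; exact hcyc g e' hfe h.symm
    · rcases hl with ⟨hx, hy⟩ | ⟨hx, hy⟩ | ⟨hx, hy⟩ | ⟨hx, hy⟩ | ⟨hx, hy⟩ | ⟨hx, hy⟩ |
        ⟨hx, hy⟩ | ⟨hx, hy⟩ | ⟨hx, hy⟩ | ⟨hx, hy⟩ | ⟨hx, hy⟩ | ⟨hx, hy⟩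
      · obtain ⟨rfl, rfl⟩ := aV_inj E hi1 hi2 (by norm_num) (by norm_num) hx
        exact Or.inr <| Or.inr <| Or.inr <| Or.inl
          ⟨rfl, e', fun h => hlink g e' hee h.symm, hy⟩
      · obtain ⟨rfl, rfl⟩ := aV_inj E hi1 hi2 (by norm_num) (by norm_num) hx
        exact Or.inr <| Or.inr <| Or.inr <| Or.inr <| Or.inr <| Or.inl
          ⟨rfl, e', fun h => hlink g e' hee h.symm, hy⟩
      · obtain ⟨rfl, rfl⟩ := aV_inj E hi1 hi2 (by norm_num) (by norm_num) hx
        exact Or.inr <| Or.inr <| Or.inr <| Or.inr <| Or.inr <| Or.inr <| Or.inr <| Or.inl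
          ⟨rfl, e', fun h => hlink g e' hee h.symm, hy⟩
      · obtain ⟨rfl, rfl⟩ := aV_inj E hi1 hi2 (by norm_num) (by norm_num) hx
        exact Or.inr <| Or.inr <| Or.inr <| Or.inr <| Or.inr <| Or.inr <| Or.inr <| Or.inr <|
          Or.inr <| Or.inl ⟨rfl, e', fun h => hlink g e' hee h.symm, hy⟩
      · -- x = aV e' 5, y = bV _ 1
        obtain ⟨rfl, rfl⟩ := aV_inj E hi1 hi2 (by norm_num) (by norm_num) hx
        exact Or.inr <| Or.inr <| Or.inr <| Or.inr <| Or.inr <| Or.inr <| Or.inr <| Or.inr <|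
          Or.inr <| Or.inr <| Or.inr <| Or.inl ⟨rfl, _, hy⟩
      · exact absurd hx (aV_ne_bV E)
      · exact absurd hx (aV_ne_bV E)
      · exact absurd hx (aV_ne_bV E)
      · -- x = aV e 24, y = bV _ 4
        obtain ⟨rfl, rfl⟩ := aV_inj E hi1 hi2 (by norm_num) (by norm_num) hx
        exact Or.inr <| Or.inr <| Or.inr <| Or.inr <| Or.inr <| Or.inr <| Or.inr <| Or.inr <|
          Or.inr <| Or.inr <| Or.inr <| Or.inr <| Or.inr <| Or.inl ⟨rfl, _, hy⟩
      · exact absurd hx (aV_ne_bV E)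
      · exact absurd hx (aV_ne_bV E)
      · exact absurd hx (aV_ne_bV E)
  case inr =>
    rcases hrel with ⟨e, a, b, hg, hy, hx⟩ | ⟨e, e', hfe, hy, hx⟩ | ⟨e, e', hee, hl⟩
    · obtain ⟨ha1, ha2, hb1, hb2⟩ := gadgetRel_bounds hg
      obtain ⟨rfl, rfl⟩ := aV_inj E hi1 hi2 (by omega) (by omega) hx
      exact Or.inl ⟨a, by omega, by omega, hy, Or.inr hg⟩
    · obtain ⟨rfl, rfl⟩ := aV_inj E hi1 hi2 (by norm_num) (by norm_num) hx
      refine Or.inr (Or.inr (Or.inl ⟨rfl, e, ?_, hy⟩))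
      intro h; exact hcyc e g hfe h
    · rcases hl with ⟨hy, hx⟩ | ⟨hy, hx⟩ | ⟨hy, hx⟩ | ⟨hy, hx⟩ | ⟨hy, hx⟩ | ⟨hy, hx⟩ |
        ⟨hy, hx⟩ | ⟨hy, hx⟩ | ⟨hy, hx⟩ | ⟨hy, hx⟩ | ⟨hy, hx⟩ | ⟨hy, hx⟩
      · obtain ⟨rfl, rfl⟩ := aV_inj E hi1 hi2 (by norm_num) (by norm_num) hx
        exact Or.inr <| Or.inr <| Or.inr <| Or.inr <| Or.inl
          ⟨rfl, e, fun h => hlink e g hee h, hy⟩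
      · obtain ⟨rfl, rfl⟩ := aV_inj E hi1 hi2 (by norm_num) (by norm_num) hx
        exact Or.inr <| Or.inr <| Or.inr <| Or.inr <| Or.inr <| Or.inr <| Or.inl
          ⟨rfl, e, fun h => hlink e g hee h, hy⟩
      · obtain ⟨rfl, rfl⟩ := aV_inj E hi1 hi2 (by norm_num) (by norm_num) hx
        exact Or.inr <| Or.inr <| Or.inr <| Or.inr <| Or.inr <| Or.inr <| Or.inr <| Or.inr <|
          Or.inl ⟨rfl, e, fun h => hlink e g hee h, hy⟩
      · obtain ⟨rfl, rfl⟩ := aV_inj E hi1 hi2 (by norm_num) (by norm_num) hx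
        exact Or.inr <| Or.inr <| Or.inr <| Or.inr <| Or.inr <| Or.inr <| Or.inr <| Or.inr <|
          Or.inr <| Or.inr <| Or.inl ⟨rfl, e, fun h => hlink e g hee h, hy⟩
      · exact absurd hx (aV_ne_bV E)
      · exact absurd hx (aV_ne_bV E)
      · exact absurd hx (aV_ne_bV E)
      · -- y' = bV _ 3, x' = aV e 23 ; ours matches aV e 23
        obtain ⟨rfl, rfl⟩ := aV_inj E hi1 hi2 (by norm_num) (by norm_num) hx
        exact Or.inr <| Or.inr <| Or.inr <| Or.inr <| Or.inr <| Or.inr <| Or.inr <| Or.inr <|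
          Or.inr <| Or.inr <| Or.inr <| Or.inr <| Or.inl ⟨rfl, _, hy⟩
      · exact absurd hx (aV_ne_bV E)
      · exact absurd hx (aV_ne_bV E)
      · exact absurd hx (aV_ne_bV E)
      · -- x' = bV _ 6, y' = aV e' 12 ; ours matches aV e' 12
        obtain ⟨rfl, rfl⟩ := aV_inj E hi1 hi2 (by norm_num) (by norm_num) hx
        exact Or.inr <| Or.inr <| Or.inr <| Or.inr <| Or.inr <| Or.inr <| Or.inr <| Or.inr <|
          Or.inr <| Or.inr <| Or.inr <| Or.inr <| Or.inr <| Or.inr ⟨rfl, _, hy⟩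
  
/-- Neighbours of `b₆^v` in `G_E`. -/
lemma GE_adj_b6 {v : V} {y : GEVert E} (hadj : (GE E f).Adj (bV E v 6) y) :
    y = bV E v 5 ∨ ∃ e', e'.1.1 = v ∧ y = aV e' 12 := by
  rw [GE, SimpleGraph.fromRel_adj] at hadj
  obtain ⟨-, hrel | hrel⟩ := hadj
  case inl =>
    rcases hrel with ⟨e, a, b, hg, hx, hy⟩ | ⟨e, e', hfe, hx, hy⟩ | ⟨e, e', hee, hl⟩
    · obtain ⟨h1, -, -, -⟩ := gadgetRel_bounds hg
      exact absurd hx.symm (aV_ne_bV E)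
    · exact absurd hx.symm (aV_ne_bV E)
    · rcases hl with ⟨hx, hy⟩ | ⟨hx, hy⟩ | ⟨hx, hy⟩ | ⟨hx, hy⟩ | ⟨hx, hy⟩ | ⟨hx, hy⟩ |
        ⟨hx, hy⟩ | ⟨hx, hy⟩ | ⟨hx, hy⟩ | ⟨hx, hy⟩ | ⟨hx, hy⟩ | ⟨hx, hy⟩ <;>
        first
        | exact absurd hx.symm (aV_ne_bV E)
        | (obtain ⟨h1, h2⟩ := bV_inj E (by norm_num) (by norm_num) (by norm_num) (by norm_num) hx
           omega)
        | skip
      -- remaining: x = bV _ 6, y = aV e' 12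
      obtain ⟨h1, -⟩ := bV_inj E (by norm_num) (by norm_num) (by norm_num) (by norm_num) hx
      exact Or.inr ⟨e', by rw [← hee, h1], hy⟩
  case inr =>
    rcases hrel with ⟨e, a, b, hg, hy, hx⟩ | ⟨e, e', hfe, hy, hx⟩ | ⟨e, e', hee, hl⟩
    · exact absurd hx.symm (aV_ne_bV E)
    · exact absurd hx.symm (aV_ne_bV E)
    · rcases hl with ⟨hy, hx⟩ | ⟨hy, hx⟩ | ⟨hy, hx⟩ | ⟨hy, hx⟩ | ⟨hy, hx⟩ | ⟨hy, hx⟩ |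
        ⟨hy, hx⟩ | ⟨hy, hx⟩ | ⟨hy, hx⟩ | ⟨hy, hx⟩ | ⟨hy, hx⟩ | ⟨hy, hx⟩ <;>
        first
        | exact absurd hx.symm (aV_ne_bV E)
        | (obtain ⟨h1, h2⟩ := bV_inj E (by norm_num) (by norm_num) (by norm_num) (by norm_num) hx
           omega)
        | skip
      -- remaining: y' = bV _ 6, x' = bV _ 5  (clause b5–b6)
      obtain ⟨h1, -⟩ := bV_inj E (by norm_num) (by norm_num) (by norm_num) (by norm_num) hx
      exact Or.inl (by rw [hy, h1])
  
end Encoding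

section ALCor

variable {V : Type*} [Fintype V] [DecidableEq V] (E : SimpleGraph V) [DecidableRel E.Adj]
variable (f : Arc E ≃ Fin (Fintype.card (Arc E)))

lemma GE_internal (hm : 2 ≤ Fintype.card (Arc E)) {g : Arc E} {i j : ℕ}
    (hi1 : 1 ≤ i) (hi2 : i ≤ 31) (hj1 : 1 ≤ j) (hj2 : j ≤ 31)
    (h : (GE E f).Adj (aV g i) (aV g j)) : gAdj i j := by
  rcases GE_adj_aV E f hm hi1 hi2 h with ⟨j', h1, h2, hy, hg⟩ |
    h' | h' | h' | h' | h' | h' | h' | h' | h' | h' | h' | h' | h' | h'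
  · obtain ⟨-, rfl⟩ := aV_inj E hj1 hj2 h1 h2 hy
    exact hg
  all_goals first
  | (obtain ⟨-, e', hne, hy⟩ := h'
     exact absurd (aV_inj E hj1 hj2 (by norm_num) (by norm_num) hy).1.symm hne)
  | (obtain ⟨-, v, hy⟩ := h'
     exact absurd hy (aV_ne_bV E))

lemma GE_noext (hm : 2 ≤ Fintype.card (Arc E)) {g : Arc E} {i : ℕ}
    (hi1 : 1 ≤ i) (hi2 : i ≤ 31) (hiA : ¬ ASet i) {y : GEVert E}
    (h : (GE E f).Adj (aV g i) y) : ∃ j, 1 ≤ j ∧ j ≤ 31 ∧ y = aV g j := by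
  rcases GE_adj_aV E f hm hi1 hi2 h with ⟨j', h1, h2, hy, -⟩ |
    h' | h' | h' | h' | h' | h' | h' | h' | h' | h' | h' | h' | h' | h'
  · exact ⟨j', h1, h2, hy⟩
  all_goals (obtain ⟨rfl, -⟩ := h'; exact absurd (by unfold ASet; omega) hiA)

lemma GE_ext8 (hm : 2 ≤ Fintype.card (Arc E)) {g : Arc E} {y : GEVert E}
    (h : (GE E f).Adj (aV g 8) y) (hy : ∀ j, 1 ≤ j → j ≤ 31 → y ≠ aV g j) :
    ∃ e, e ≠ g ∧ y = aV e 18 := by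
  rcases GE_adj_aV E f hm (i := 8) (by norm_num) (by norm_num) h with ⟨j', h1, h2, hy', -⟩ |
    h' | h' | h' | h' | h' | h' | h' | h' | h' | h' | h' | h' | h' | h'
  · exact absurd hy' (hy j' h1 h2)
  all_goals first
  | (obtain ⟨h0, -⟩ := h'; omega)
  | (obtain ⟨-, e', hne, hy'⟩ := h'; exact ⟨e', hne, hy'⟩)

lemma GE_ext18 (hm : 2 ≤ Fintype.card (Arc E)) {g : Arc E} {y : GEVert E}
    (h : (GE E f).Adj (aV g 18) y) (hy : ∀ j, 1 ≤ j → j ≤ 31 → y ≠ aV g j) :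
    ∃ e, e ≠ g ∧ y = aV e 8 := by
  rcases GE_adj_aV E f hm (i := 18) (by norm_num) (by norm_num) h with ⟨j', h1, h2, hy', -⟩ |
    h' | h' | h' | h' | h' | h' | h' | h' | h' | h' | h' | h' | h' | h'
  · exact absurd hy' (hy j' h1 h2)
  all_goals first
  | (obtain ⟨h0, -⟩ := h'; omega)
  | (obtain ⟨-, e', hne, hy'⟩ := h'; exact ⟨e', hne, hy'⟩)

end ALCor

section MainAux

open scoped Classical

/-- A `Sym2` has at most two elements. -/
lemma sym2_filter_card_le_two {α : Type*} [Fintype α] [DecidableEq α] (s : Sym2 α) :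
    (Finset.univ.filter (fun x => x ∈ s)).card ≤ 2 := by
  refine Sym2.ind (fun a b => ?_) s
  have hsub : (Finset.univ.filter (fun x => x ∈ s(a, b))) ⊆ {a, b} := by
    intro x hx
    rw [Finset.mem_filter] at hx
    rcases Sym2.mem_iff.mp hx.2 with rfl | rfl <;> simp
  exact le_trans (Finset.card_le_card hsub) (Finset.card_insert_le _ _ |>.trans (by simp))

variable {V : Type*} [Fintype V] [DecidableEq V] {E : SimpleGraph V} [DecidableRel E.Adj]

/-- number of `18`-partners of the `8`-vertex of gadget `g` -/
noncomputable def cnt8 (A : GEVert E → GEVert E → Prop) (g : Arc E) : ℕ :=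
  (Finset.univ.filter (fun e : Arc E => A (aV g 8) (aV e 18))).card

/-- number of `8`-partners of the `18`-vertex of gadget `g` -/
noncomputable def cnt18 (A : GEVert E → GEVert E → Prop) (g : Arc E) : ℕ :=
  (Finset.univ.filter (fun e : Arc E => A (aV e 8) (aV g 18))).card

lemma cnt_swap (A : GEVert E → GEVert E → Prop) :
    ∑ g : Arc E, cnt8 A g = ∑ g : Arc E, cnt18 A g := by
  have h8 : ∀ g : Arc E, cnt8 A g =
      ∑ e : Arc E, if A (aV g 8) (aV e 18) then 1 else 0 := by
    intro g; rw [cnt8, Finset.card_filter]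
  have h18 : ∀ g : Arc E, cnt18 A g =
      ∑ e : Arc E, if A (aV e 8) (aV g 18) then 1 else 0 := by
    intro g; rw [cnt18, Finset.card_filter]
  calc ∑ g : Arc E, cnt8 A g
      = ∑ g : Arc E, ∑ e : Arc E, if A (aV g 8) (aV e 18) then 1 else 0 :=
        Finset.sum_congr rfl (fun g _ => h8 g)
    _ = ∑ e : Arc E, ∑ g : Arc E, if A (aV g 8) (aV e 18) then 1 else 0 := Finset.sum_comm
    _ = ∑ g : Arc E, cnt18 A g := Finset.sum_congr rfl (fun e _ => (h18 e).symm)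

end MainAux

/-- For every `d ≥ 2`, with `ε = 1/(8(d+3)²(6+31d))`, for every `d`-regular
base graph `E` the graph `G_E` is `ε`-far from being Hamiltonian w.r.t. the degree bound
`d + 3`. -/
theorem stmt11 {V : Type*} [Fintype V] [DecidableEq V] (E : SimpleGraph V)
    [DecidableRel E.Adj] (d : ℕ) (hd : 2 ≤ d) (hreg : IsRegularDeg E d)
    (f : Arc E ≃ Fin (Fintype.card (Arc E))) :
    FarFromHamiltonian (GE E f) (d + 3)
      (1 / (8 * ((d : ℝ) + 3) ^ 2 * (6 + 31 * (d : ℝ)))) := by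
  classical
  intro F hFdiag hFcard hHam
  -- basic cardinalities
  have hdeg : ∀ v : V, E.degree v = d := by
    intro v
    have h := hreg v
    rwa [Set.ncard_eq_toFinset_card', ← SimpleGraph.neighborFinset_def] at h
  have hmnd : Fintype.card (Arc E) = Fintype.card V * d := by
    rw [Fintype.card_subtype, Finset.card_filter, Fintype.sum_prod_type]
    have hv : ∀ v : V, (∑ w : V, if E.Adj v w then 1 else 0) = d := by
      intro v
      rw [← Finset.card_filter, ← SimpleGraph.neighborFinset_eq_filter]
      exact hdeg v
    rw [Finset.sum_congr rfl (fun v _ => hv v)]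
    simp [Finset.sum_const, Finset.card_univ, mul_comm]
  have hcardW : Fintype.card (GEVert E) = 31 * Fintype.card (Arc E) + 6 * Fintype.card V := by
    simp [GEVert, Fintype.card_sum, Fintype.card_prod, Fintype.card_fin, mul_comm]
  -- the empty case
  by_cases hn0 : Fintype.card V = 0
  · have hVempty : IsEmpty V := Fintype.card_eq_zero_iff.mp hn0
    have hWempty : IsEmpty (GEVert E) := by
      constructor
      rintro (⟨e, k⟩ | ⟨v, k⟩)
      · exact IsEmpty.elim hVempty e.1.1
      · exact IsEmpty.elim hVempty v
    have h0 : Fintype.card (GEVert E) = 0 := Fintype.card_eq_zero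
    obtain ⟨a, -⟩ := hHam (by omega)
    exact hWempty.false a
  have hn1 : 1 ≤ Fintype.card V := Nat.one_le_iff_ne_zero.mpr hn0
  have hm2 : 2 ≤ Fintype.card (Arc E) := by
    have := Nat.mul_le_mul hn1 hd
    omega
  have hne1 : Fintype.card (GEVert E) ≠ 1 := by omega
  obtain ⟨a, p, hp⟩ := hHam hne1
  -- cycle machinery
  have hC2 : ∀ x, ∃ y z, y ≠ z ∧ ∀ w, (p.toSubgraph.Adj x w ↔ w = y ∨ w = z) :=
    fun x => ham_two_nbrs hp x
  have hCcut : ∀ S : Set (GEVert E), (∃ s, s ∈ S) → (∃ t, t ∉ S) →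
      ∃ u v, u ∈ S ∧ v ∉ S ∧ p.toSubgraph.Adj u v := fun S h1 h2 => ham_cut hp S h1 h2
  have hCsym : ∀ x y, p.toSubgraph.Adj x y → p.toSubgraph.Adj y x := fun x y h => h.symm
  -- cleanliness
  have hcleanAdj : ∀ x y, (∀ s ∈ F, x ∉ s) → p.toSubgraph.Adj x y → (GE E f).Adj x y := by
    intro x y hcl hadj
    have h' := hadj.adj_sub
    rw [SimpleGraph.fromEdgeSet_adj] at h'
    rcases Set.mem_symmDiff.mp h'.1 with ⟨hmem, -⟩ | ⟨hmem, -⟩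
    · rwa [SimpleGraph.mem_edgeSet] at hmem
    · exact absurd (Sym2.mem_mk_left x y) (hcl _ hmem)
  have hcleanaV : ∀ g : Arc E, (∀ k : Fin 31, ∀ s ∈ F, (Sum.inl (g, k) : GEVert E) ∉ s) →
      ∀ i : ℕ, ∀ s ∈ F, (aV g i : GEVert E) ∉ s := by
    intro g hg i
    exact hg _
  -- gadget hypotheses for clean gadgets
  have hGinj : ∀ (g : Arc E) (i j : ℕ), 1 ≤ i → i ≤ 31 → 1 ≤ j → j ≤ 31 →
      aV g i = aV g j → i = j := fun g i j h1 h2 h3 h4 h => (aV_inj E h1 h2 h3 h4 h).2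
  have hGint : ∀ g : Arc E, (∀ k : Fin 31, ∀ s ∈ F, (Sum.inl (g, k) : GEVert E) ∉ s) →
      ∀ i j, 1 ≤ i → i ≤ 31 → 1 ≤ j → j ≤ 31 →
      p.toSubgraph.Adj (aV g i) (aV g j) → gAdj i j := fun g hg i j h1 h2 h3 h4 h =>
    GE_internal E f hm2 h1 h2 h3 h4 (hcleanAdj _ _ (hcleanaV g hg i) h)
  have hGnoext : ∀ g : Arc E, (∀ k : Fin 31, ∀ s ∈ F, (Sum.inl (g, k) : GEVert E) ∉ s) →
      ∀ i, 1 ≤ i → i ≤ 31 → ¬ ASet i →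
      ∀ w, p.toSubgraph.Adj (aV g i) w → GInt (fun k => aV g k) w := by
    intro g hg i h1 h2 hiA w hw
    obtain ⟨j, hj1, hj2, rfl⟩ :=
      GE_noext E f hm2 h1 h2 hiA (hcleanAdj _ _ (hcleanaV g hg i) hw)
    exact ⟨j, hj1, hj2, rfl⟩
  -- an `8`-partner adjacent to `18` of a clean gadget is external
  have hnotint8 : ∀ g : Arc E, (∀ k : Fin 31, ∀ s ∈ F, (Sum.inl (g, k) : GEVert E) ∉ s) →
      ∀ e, p.toSubgraph.Adj (aV e 8) (aV g 18) → ¬ GInt (fun k => aV g k) (aV e 8) := by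
    rintro g hg e hadj ⟨j, hj1, hj2, hj⟩
    obtain ⟨heg, hj8⟩ := aV_inj E (by norm_num) (by norm_num) hj1 hj2 hj
    rw [heg] at hadj
    have := hGint g hg 8 18 (by norm_num) (by norm_num) (by norm_num) (by norm_num) hadj
    simp only [gAdj, gadgetRel] at this
    omega
  -- pointwise bounds on the 8↔18 counts
  have hb3 : ∀ g : Arc E, cnt18 p.toSubgraph.Adj g ≤ 2 := by
    intro g
    obtain ⟨y, z, hyz, hiff⟩ := hC2 (aV g 18)
    have hsub : cnt18 p.toSubgraph.Adj g ≤ ({y, z} : Finset (GEVert E)).card := by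
      apply Finset.card_le_card_of_injOn (fun e => aV e 8)
      · intro e he
        rw [Finset.mem_coe, Finset.mem_filter] at he
        rcases (hiff (aV e 8)).mp (hCsym _ _ he.2) with h | h <;> simp [h]
      · intro e1 _ e2 _ heq
        exact (aV_inj E (by norm_num) (by norm_num) (by norm_num) (by norm_num) heq).1
    refine hsub.trans ?_
    exact (Finset.card_insert_le _ _).trans (by simp)
  have hb2 : ∀ g : Arc E, (∀ k : Fin 31, ∀ s ∈ F, (Sum.inl (g, k) : GEVert E) ∉ s) →
      cnt18 p.toSubgraph.Adj g ≤ cnt8 p.toSubgraph.Adj g := by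
    intro g hg
    by_cases h0 : cnt18 p.toSubgraph.Adj g = 0
    · omega
    have hpos : 0 < cnt18 p.toSubgraph.Adj g := Nat.pos_of_ne_zero h0
    obtain ⟨e0, he0⟩ := Finset.card_pos.mp hpos
    rw [Finset.mem_filter] at he0
    -- at most one external partner at 18
    have hle1 : cnt18 p.toSubgraph.Adj g ≤ 1 := by
      rw [cnt18, Finset.card_le_one]
      intro e1 h1 e2 h2
      rw [Finset.mem_filter] at h1 h2
      have heq := GLa (fun k => aV g k) p.toSubgraph.Adj (fun i j a b c dd h => hGinj g i j a b c dd h)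
        hCsym hC2 (hGint g hg) (hGnoext g hg) hCcut (aV e1 8) (aV e2 8)
        (hCsym _ _ h1.2) (hCsym _ _ h2.2) (hnotint8 g hg e1 h1.2) (hnotint8 g hg e2 h2.2)
      exact (aV_inj E (by norm_num) (by norm_num) (by norm_num) (by norm_num) heq).1
    -- an external edge at 8 exists
    have hx18 : ∃ w, p.toSubgraph.Adj (aV g 18) w ∧ ¬ GInt (fun k => aV g k) w :=
      ⟨aV e0 8, hCsym _ _ he0.2, hnotint8 g hg e0 he0.2⟩
    obtain ⟨w, hw8, hwni⟩ := GLb (fun k => aV g k) p.toSubgraph.Adj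
      (fun i j a b c dd h => hGinj g i j a b c dd h) hCsym hC2 (hGint g hg) (hGnoext g hg)
      hCcut hx18
    obtain ⟨e, hne, rfl⟩ := GE_ext8 E f hm2 (hcleanAdj _ _ (hcleanaV g hg 8) hw8)
      (fun j hj1 hj2 heq => hwni ⟨j, hj1, hj2, heq⟩)
    have h8pos : 0 < cnt8 p.toSubgraph.Adj g :=
      Finset.card_pos.mpr ⟨e, Finset.mem_filter.mpr ⟨Finset.mem_univ e, hw8⟩⟩
    omega
  have hb1 : ∀ g : Arc E, (∀ k : Fin 31, ∀ s ∈ F, (Sum.inl (g, k) : GEVert E) ∉ s) →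
      p.toSubgraph.Adj (bV E g.1.1 6) (aV g 12) →
      cnt18 p.toSubgraph.Adj g + 1 ≤ cnt8 p.toSubgraph.Adj g := by
    intro g hg hsrc
    have hx12 : ∃ w, p.toSubgraph.Adj (aV g 12) w ∧ ¬ GInt (fun k => aV g k) w :=
      ⟨bV E g.1.1 6, hCsym _ _ hsrc, fun ⟨j, hj1, hj2, hj⟩ => aV_ne_bV E hj.symm⟩
    obtain ⟨⟨w, hw8, hwni⟩, hnoext18⟩ := GLc (fun k => aV g k) p.toSubgraph.Adj
      (fun i j a b c dd h => hGinj g i j a b c dd h) hCsym hC2 (hGint g hg) (hGnoext g hg)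
      hCcut hx12
    have h180 : cnt18 p.toSubgraph.Adj g = 0 := by
      rw [cnt18, Finset.card_eq_zero, Finset.eq_empty_iff_forall_notMem]
      intro e he
      rw [Finset.mem_filter] at he
      exact hnotint8 g hg e he.2 (hnoext18 _ (hCsym _ _ he.2))
    obtain ⟨e, hne, rfl⟩ := GE_ext8 E f hm2 (hcleanAdj _ _ (hcleanaV g hg 8) hw8)
      (fun j hj1 hj2 heq => hwni ⟨j, hj1, hj2, heq⟩)
    have h8pos : 0 < cnt8 p.toSubgraph.Adj g :=
      Finset.card_pos.mpr ⟨e, Finset.mem_filter.mpr ⟨Finset.mem_univ e, hw8⟩⟩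
    omega
  -- global counting
  have hArcNE : Nonempty (Arc E) := Fintype.card_pos_iff.mp (by omega)
  set A8 : Arc E → ℕ := cnt8 p.toSubgraph.Adj with hA8def
  set A18 : Arc E → ℕ := cnt18 p.toSubgraph.Adj with hA18def
  set CleanP : Arc E → Prop :=
    fun g => ∀ k : Fin 31, ∀ s ∈ F, (Sum.inl (g, k) : GEVert E) ∉ s with hCleanPdef
  set srcP : Arc E → Prop :=
    fun g => p.toSubgraph.Adj (bV E g.1.1 6) (aV g 12) with hsrcPdef
  set S0 : Finset (Arc E) := Finset.univ.filter CleanP with hS0def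
  set S1 : Finset (Arc E) := S0.filter srcP with hS1def
  set S2 : Finset (Arc E) := S0.filter (fun g => ¬ srcP g) with hS2def
  set DF : Finset (Arc E) := Finset.univ.filter (fun g => ¬ CleanP g) with hDFdef
  have hsplit8 : ∑ g ∈ S1, A8 g + ∑ g ∈ S2, A8 g = ∑ g ∈ S0, A8 g :=
    Finset.sum_filter_add_sum_filter_not S0 srcP A8
  have hsplit18 : ∑ g ∈ S1, A18 g + ∑ g ∈ S2, A18 g = ∑ g ∈ S0, A18 g :=
    Finset.sum_filter_add_sum_filter_not S0 srcP A18
  have hsum1 : ∑ g ∈ S1, A18 g + S1.card ≤ ∑ g ∈ S1, A8 g := by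
    have h1 : ∀ g ∈ S1, A18 g + 1 ≤ A8 g := by
      intro g hgm
      rw [hS1def, Finset.mem_filter, hS0def, Finset.mem_filter] at hgm
      exact hb1 g hgm.1.2 hgm.2
    calc ∑ g ∈ S1, A18 g + S1.card = ∑ g ∈ S1, (A18 g + 1) := by
          rw [Finset.sum_add_distrib, Finset.sum_const, smul_eq_mul, mul_one]
      _ ≤ ∑ g ∈ S1, A8 g := Finset.sum_le_sum h1
  have hsum2 : ∑ g ∈ S2, A18 g ≤ ∑ g ∈ S2, A8 g := by
    refine Finset.sum_le_sum ?_
    intro g hgm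
    rw [hS2def, Finset.mem_filter, hS0def, Finset.mem_filter] at hgm
    exact hb2 g hgm.1.2
  have hsum3 : ∑ g ∈ S0, A8 g ≤ ∑ g ∈ Finset.univ, A8 g :=
    Finset.sum_le_sum_of_subset (Finset.filter_subset _ _)
  have hsum4 : ∑ g ∈ Finset.univ, A8 g = ∑ g ∈ Finset.univ, A18 g :=
    cnt_swap p.toSubgraph.Adj
  have hsum5 : ∑ g ∈ S0, A18 g + ∑ g ∈ DF, A18 g = ∑ g ∈ Finset.univ, A18 g :=
    Finset.sum_filter_add_sum_filter_not Finset.univ CleanP A18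
  have hsum6 : ∑ g ∈ DF, A18 g ≤ 2 * DF.card := by
    calc ∑ g ∈ DF, A18 g ≤ ∑ _g ∈ DF, 2 := Finset.sum_le_sum (fun g _ => hb3 g)
      _ = 2 * DF.card := by rw [Finset.sum_const, smul_eq_mul, mul_comm]
  have hS1bound : S1.card ≤ 2 * DF.card := by omega
  -- touched vertices
  set TF : Finset (GEVert E) :=
    Finset.univ.filter (fun x : GEVert E => ∃ s ∈ F, x ∈ s) with hTFdef
  have hTF : TF.card ≤ 2 * F.card := by
    have hsub : TF ⊆ F.biUnion (fun s => Finset.univ.filter (fun x => x ∈ s)) := by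
      intro x hx
      rw [hTFdef, Finset.mem_filter] at hx
      obtain ⟨s, hs, hxs⟩ := hx.2
      exact Finset.mem_biUnion.mpr ⟨s, hs, Finset.mem_filter.mpr ⟨Finset.mem_univ x, hxs⟩⟩
    calc TF.card ≤ _ := Finset.card_le_card hsub
      _ ≤ ∑ s ∈ F, (Finset.univ.filter (fun x => x ∈ s)).card := Finset.card_biUnion_le
      _ ≤ ∑ _s ∈ F, 2 := Finset.sum_le_sum (fun s _ => sym2_filter_card_le_two s)
      _ = 2 * F.card := by rw [Finset.sum_const, smul_eq_mul, mul_comm]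
  have hDF : DF.card ≤ TF.card := by
    have hex : ∀ g : Arc E, ∃ k : Fin 31,
        (¬ CleanP g → ∃ s ∈ F, (Sum.inl (g, k) : GEVert E) ∈ s) := by
      intro g
      by_cases h : CleanP g
      · exact ⟨⟨0, by norm_num⟩, fun hc => absurd h hc⟩
      · have h' : ∃ k : Fin 31, ∃ s ∈ F, (Sum.inl (g, k) : GEVert E) ∈ s := by
          simp only [hCleanPdef] at h
          push_neg at h
          exact h
        obtain ⟨k, hk⟩ := h'
        exact ⟨k, fun _ => hk⟩
    choose kf hkf using hex
    refine Finset.card_le_card_of_injOn (fun g => (Sum.inl (g, kf g) : GEVert E)) ?_ ?_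
    · intro g hgm
      rw [hDFdef, Finset.mem_coe, Finset.mem_filter] at hgm
      rw [hTFdef, Finset.mem_coe, Finset.mem_filter]
      exact ⟨Finset.mem_univ _, hkf g hgm.2⟩
    · intro g1 _ g2 _ heq
      simp only [Sum.inl.injEq, Prod.mk.injEq] at heq
      exact heq.1
  -- vertices with clean b₆
  set CBp : V → Prop := fun v => ∀ s ∈ F, (bV E v 6 : GEVert E) ∉ s with hCBpdef
  have hsplitV : (Finset.univ.filter CBp).card
      + (Finset.univ.filter (fun v => ¬ CBp v)).card = Fintype.card V := by
    rw [Finset.card_filter_add_card_filter_not, Finset.card_univ]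
  have hNotCB : (Finset.univ.filter (fun v => ¬ CBp v)).card ≤ TF.card := by
    refine Finset.card_le_card_of_injOn (fun v => (bV E v 6 : GEVert E)) ?_ ?_
    · intro v hv
      rw [Finset.mem_coe, Finset.mem_filter] at hv
      have h2 := hv.2
      simp only [hCBpdef] at h2
      push_neg at h2
      rw [hTFdef, Finset.mem_coe, Finset.mem_filter]
      exact ⟨Finset.mem_univ _, h2⟩
    · intro v1 _ v2 _ heq
      exact (bV_inj E (by norm_num) (by norm_num) (by norm_num) (by norm_num) heq).1
  -- each clean b₆ yields a source arc
  have hB6pick : ∀ v : V, CBp v →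
      ∃ g : Arc E, g.1.1 = v ∧ p.toSubgraph.Adj (bV E v 6) (aV g 12) := by
    intro v hv
    rw [hCBpdef] at hv
    obtain ⟨y, z, hyz, hiff⟩ := hC2 (bV E v 6)
    have hy : p.toSubgraph.Adj (bV E v 6) y := (hiff y).mpr (Or.inl rfl)
    have hz : p.toSubgraph.Adj (bV E v 6) z := (hiff z).mpr (Or.inr rfl)
    have hcy := GE_adj_b6 E f (hcleanAdj _ _ hv hy)
    have hcz := GE_adj_b6 E f (hcleanAdj _ _ hv hz)
    rcases hcy with rfl | ⟨e, he, rfl⟩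
    · rcases hcz with rfl | ⟨e, he, rfl⟩
      · exact absurd rfl hyz
      · exact ⟨e, he, hz⟩
    · exact ⟨e, he, hy⟩
  set T12F : Finset (Arc E) := Finset.univ.filter srcP with hT12def
  have hCBT12 : (Finset.univ.filter CBp).card ≤ T12F.card := by
    have hex2 : ∀ v : V, ∃ g : Arc E,
        (CBp v → g.1.1 = v ∧ p.toSubgraph.Adj (bV E v 6) (aV g 12)) := by
      intro v
      by_cases h : CBp v
      · obtain ⟨g, hg⟩ := hB6pick v h
        exact ⟨g, fun _ => hg⟩
      · exact ⟨Classical.arbitrary _, fun hc => absurd hc h⟩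
    choose gf hgf using hex2
    refine Finset.card_le_card_of_injOn gf ?_ ?_
    · intro v hv
      rw [Finset.mem_coe, Finset.mem_filter] at hv
      have hspec := hgf v hv.2
      rw [hT12def, Finset.mem_coe, Finset.mem_filter]
      refine ⟨Finset.mem_univ _, ?_⟩
      rw [hsrcPdef]
      show p.toSubgraph.Adj (bV E (gf v).1.1 6) (aV (gf v) 12)
      rw [hspec.1]
      exact hspec.2
    · intro v1 hv1 v2 hv2 heq
      rw [Finset.coe_filter, Set.mem_setOf_eq] at hv1 hv2
      have e1 := (hgf v1 hv1.2).1
      have e2 := (hgf v2 hv2.2).1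
      rw [← e1, ← e2, heq]
  have hT12split : T12F.card ≤ S1.card + DF.card := by
    have hsp : (T12F.filter CleanP).card + (T12F.filter (fun g => ¬ CleanP g)).card
        = T12F.card := by
      rw [Finset.card_filter_add_card_filter_not]
    have hsub1 : T12F.filter CleanP ⊆ S1 := by
      intro g hgm
      rw [Finset.mem_filter, hT12def, Finset.mem_filter] at hgm
      rw [hS1def, Finset.mem_filter, hS0def, Finset.mem_filter]
      exact ⟨⟨Finset.mem_univ _, hgm.2⟩, hgm.1.2⟩
    have hsub2 : T12F.filter (fun g => ¬ CleanP g) ⊆ DF := by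
      intro g hgm
      rw [Finset.mem_filter] at hgm
      rw [hDFdef, Finset.mem_filter]
      exact ⟨Finset.mem_univ _, hgm.2⟩
    have := Finset.card_le_card hsub1
    have := Finset.card_le_card hsub2
    omega
  have hkey : Fintype.card V ≤ 8 * F.card := by omega
  -- numeric contradiction
  rw [hcardW, hmnd] at hFcard
  have hdpos : (0 : ℝ) < (d : ℝ) + 3 := by positivity
  have hnum : (F.card : ℝ) ≤ (Fintype.card V : ℝ) / (8 * ((d : ℝ) + 3)) := by
    have hcast : ((31 * (Fintype.card V * d) + 6 * Fintype.card V : ℕ) : ℝ)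
        = (Fintype.card V : ℝ) * (6 + 31 * (d : ℝ)) := by push_cast; ring
    rw [hcast] at hFcard
    have heq : 1 / (8 * ((d : ℝ) + 3) ^ 2 * (6 + 31 * (d : ℝ))) * (↑(d + 3)) *
        ((Fintype.card V : ℝ) * (6 + 31 * (d : ℝ)))
        = (Fintype.card V : ℝ) / (8 * ((d : ℝ) + 3)) := by
      push_cast
      field_simp
    rw [heq] at hFcard
    exact hFcard
  have hkey' : (Fintype.card V : ℝ) ≤ 8 * F.card := by exact_mod_cast hkey
  have h1 : (Fintype.card V : ℝ) ≤ (Fintype.card V : ℝ) / ((d : ℝ) + 3) := by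
    calc (Fintype.card V : ℝ) ≤ 8 * F.card := hkey'
      _ ≤ 8 * ((Fintype.card V : ℝ) / (8 * ((d : ℝ) + 3))) := by linarith
      _ = (Fintype.card V : ℝ) / ((d : ℝ) + 3) := by field_simp
  have hnpos : (0 : ℝ) < Fintype.card V := by exact_mod_cast hn1
  have hlt : (Fintype.card V : ℝ) / ((d : ℝ) + 3) < (Fintype.card V : ℝ) := by
    rw [div_lt_iff₀ hdpos]
    nlinarith
  linarith
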